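/- Let b be a prime, m = ℓd + r with ℓ ∈ ℕ and 0 ≤ r < d. If the generator matrices C^(1),…,C^(d) ∈ (ℤ_b)^{m×m} are all permutation matrices, then the smallest t-value of the resulting digital net satisfies t ≥ (d−2)⌊m/d⌋ + r − 1. -/

import Mathlib

/-- A matrix with two equal rows has rank less than its number of rows. -/
lemma rank_lt_card_of_eq_rows {K : Type*} [Field K] {ι n : Type*} [Fintype ι] [Fintype n]
    [DecidableEq ι] (M : Matrix ι n K) {p q : ι} (hpq : p ≠ q)
    (h : ∀ s, M p s = M q s) : M.rank < Fintype.card ι := by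
  classical
  let φ : (ι → K) →ₗ[K] K :=
    LinearMap.proj (R := K) (φ := fun _ : ι => K) p - LinearMap.proj (R := K) (φ := fun _ : ι => K) q
  have hker : LinearMap.range M.mulVecLin ≤ LinearMap.ker φ := by
    rintro x ⟨v, rfl⟩
    simp only [LinearMap.mem_ker, Matrix.mulVecLin_apply, φ, LinearMap.sub_apply,
      LinearMap.proj_apply]
    simp [Matrix.mulVec, dotProduct, h]
  have hφ : φ ≠ 0 := by
    intro h0
    have h1 : φ (Pi.single p 1) = (1 : K) := by
      simp [φ, Pi.single_eq_of_ne (Ne.symm hpq)]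
    rw [h0] at h1
    simp at h1
  have hlt : LinearMap.ker φ < ⊤ :=
    lt_top_iff_ne_top.2 fun ht => hφ (LinearMap.ker_eq_top.1 ht)
  calc M.rank ≤ Module.finrank K (LinearMap.ker φ) := Submodule.finrank_mono hker
    _ < Module.finrank K (ι → K) := Submodule.finrank_lt hlt.ne
    _ = Fintype.card ι := Module.finrank_pi K

lemma fill_aux {d m : ℕ} (n : ℕ) (hn : n ≤ d * m) :
    ∀ (t : ℕ) (u : Fin d → ℕ), (∀ j, u j ≤ m) → (∑ j, u j) ≤ n → n - (∑ j, u j) = t →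
    ∃ v : Fin d → ℕ, (∀ j, u j ≤ v j) ∧ (∀ j, v j ≤ m) ∧ (∑ j, v j) = n := by
  intro t
  induction t with
  | zero =>
    intro u hu h1 ht
    exact ⟨u, fun j => le_refl _, hu, by omega⟩
  | succ t ih =>
    intro u hu h1 ht
    have hex : ∃ j, u j < m := by
      by_contra hc
      push_neg at hc
      have heq : ∀ j, u j = m := fun j => le_antisymm (hu j) (hc j)
      have : (∑ j, u j) = d * m := by
        simp [heq, Finset.sum_const, Finset.card_univ]
      omega
    obtain ⟨j, hj⟩ := hex
    have hsum : (∑ i, Function.update u j (u j + 1) i) = (∑ i, u i) + 1 := by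
      rw [Finset.sum_update_of_mem (Finset.mem_univ j),
        Finset.sum_eq_sum_sdiff_singleton_add (Finset.mem_univ j) u]
      omega
    obtain ⟨v, hv1, hv2, hv3⟩ := ih (Function.update u j (u j + 1))
      (by
        intro i
        rcases eq_or_ne i j with rfl | hij
        · simpa using hj
        · simpa [Function.update_of_ne hij] using hu i)
      (by omega) (by omega)
    refine ⟨v, fun i => ?_, hv2, hv3⟩
    refine le_trans ?_ (hv1 i)
    rcases eq_or_ne i j with rfl | hij
    · simp
    · simp [Function.update_of_ne hij]



open Classical in
/-- The quality criterion `ρ(𝒞)` of a collection of generator matrices: the greatest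
`ρ ∈ {0,…,m}` such that for every `m⃗ = (m_1,…,m_d)` with `∑_j m_j = ρ`, the matrix
obtained by stacking the first `m_j` rows of each `C^(j)` has rank `ρ` over `ℤ_b`. -/
noncomputable def rhoC (b d m : ℕ) (C : Fin d → Matrix (Fin m) (Fin m) (ZMod b)) : ℕ :=
  Nat.findGreatest (fun ρ =>
    ∀ mv : Fin d → Fin (m + 1), (∑ j, (mv j : ℕ)) = ρ →
      (Matrix.of fun (p : (j : Fin d) × Fin ((mv j : ℕ))) (s : Fin m) =>
        C p.1 (Fin.castLE (Fin.is_le (mv p.1)) p.2) s).rank = ρ) m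

/-- If the generator matrices `C^(1),…,C^(d)` are all permutation matrices and
`m = ℓd + r` with `ℓ ≥ 1`, `0 ≤ r < d`, then the exact `t`-value `t(𝒞) = m − ρ(𝒞)` of the
resulting digital net satisfies `t(𝒞) ≥ (d−2)⌊m/d⌋ + r − 1`. -/
theorem stmt16 (b d m ℓ r : ℕ) [Fact (Nat.Prime b)]
    (hl : 1 ≤ ℓ) (hm : m = ℓ * d + r) (hr : r < d)
    (π : Fin d → Equiv.Perm (Fin m))
    (C : Fin d → Matrix (Fin m) (Fin m) (ZMod b))
    (hperm : ∀ j k s, C j k s = if π j k = s then 1 else 0) :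
    ((d : ℤ) - 2) * ((m / d : ℕ) : ℤ) + (r : ℤ) - 1 ≤ (m : ℤ) - (rhoC b d m C : ℤ) := by
  classical
  have hd : 0 < d := lt_of_le_of_lt (Nat.zero_le r) hr
  have hmd : m / d = ℓ := by
    rw [hm, mul_comm, Nat.mul_add_div hd, Nat.div_eq_of_lt hr]
    omega
  suffices h : rhoC b d m C ≤ 2 * ℓ + 1 by
    rw [hmd]
    have hρ : (rhoC b d m C : ℤ) ≤ 2 * ℓ + 1 := by exact_mod_cast h
    have hm' : (m : ℤ) = ℓ * d + r := by exact_mod_cast hm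
    nlinarith [hρ, hm']
  by_contra hcon
  push_neg at hcon
  have hρm : rhoC b d m C ≤ m := Nat.findGreatest_le m
  set ρ := rhoC b d m C with hρdef
  have hP : ∀ mv : Fin d → Fin (m + 1), (∑ j, (mv j : ℕ)) = ρ →
      (Matrix.of fun (p : (j : Fin d) × Fin ((mv j : ℕ))) (s : Fin m) =>
        C p.1 (Fin.castLE (Fin.is_le (mv p.1)) p.2) s).rank = ρ :=
    Nat.findGreatest_of_ne_zero hρdef.symm (by omega)
  have hm2 : 2 * ℓ + 2 ≤ m := by omega
  have hle : ℓ + 1 ≤ m := by omega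
  have hcard : Fintype.card (Fin m) < Fintype.card (Fin d × Fin (ℓ + 1)) := by
    simp only [Fintype.card_fin, Fintype.card_prod]
    have : d * (ℓ + 1) = ℓ * d + d := by ring
    omega
  obtain ⟨⟨j1, k1⟩, ⟨j2, k2⟩, hpq, heq⟩ :=
    Fintype.exists_ne_map_eq_of_card_lt
      (fun x : Fin d × Fin (ℓ + 1) => π x.1 (Fin.castLE hle x.2)) hcard
  simp only at heq
  have hj : j1 ≠ j2 := by
    rintro rfl
    apply hpq
    have h2 : (k1 : ℕ) = (k2 : ℕ) := by
      simpa using congrArg Fin.val ((π j1).injective heq)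
    simp [Fin.ext h2]
  -- the base vector
  set u : Fin d → ℕ := fun j => if j = j1 then (k1 : ℕ) + 1 else if j = j2 then (k2 : ℕ) + 1 else 0 with hu
  have hsum_u : (∑ j, u j) = (k1 : ℕ) + (k2 : ℕ) + 2 := by
    rw [Finset.sum_eq_add j1 j2 hj
      (by intro c _ hc; simp [hu, hc.1, hc.2])
      (by simp) (by simp)]
    simp [hu, hj.symm, Ne.symm hj]
    omega
  have hk1 : (k1 : ℕ) ≤ ℓ := Nat.lt_succ_iff.mp k1.isLt
  have hk2 : (k2 : ℕ) ≤ ℓ := Nat.lt_succ_iff.mp k2.isLt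
  obtain ⟨v, hv1, hv2, hv3⟩ := fill_aux (d := d) (m := m) ρ
    (le_trans hρm (Nat.le_mul_of_pos_left m hd)) (ρ - ∑ j, u j) u
    (by
      intro j
      simp only [hu]
      split_ifs <;> omega)
    (by omega) rfl
  set mv : Fin d → Fin (m + 1) := fun j => ⟨v j, Nat.lt_succ_of_le (hv2 j)⟩ with hmv
  have hrk := hP mv (by simpa [hmv] using hv3)
  set M : Matrix ((j : Fin d) × Fin ((mv j : ℕ))) (Fin m) (ZMod b) :=
    Matrix.of fun p s => C p.1 (Fin.castLE (Fin.is_le (mv p.1)) p.2) s with hM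
  have hu1 : (k1 : ℕ) < v j1 := by have := hv1 j1; simp [hu] at this; omega
  have hu2 : (k2 : ℕ) < v j2 := by have := hv1 j2; simp [hu, hj.symm, Ne.symm hj] at this; omega
  set a : (j : Fin d) × Fin ((mv j : ℕ)) := ⟨j1, ⟨(k1 : ℕ), hu1⟩⟩ with ha
  set c : (j : Fin d) × Fin ((mv j : ℕ)) := ⟨j2, ⟨(k2 : ℕ), hu2⟩⟩ with hc
  have hac : a ≠ c := fun h => hj (congrArg Sigma.fst h)
  have hrows : ∀ s, M a s = M c s := by
    intro s
    show C j1 (Fin.castLE (Fin.is_le (mv j1)) ⟨(k1 : ℕ), hu1⟩) s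
      = C j2 (Fin.castLE (Fin.is_le (mv j2)) ⟨(k2 : ℕ), hu2⟩) s
    have e1 : Fin.castLE (Fin.is_le (mv j1)) (⟨(k1 : ℕ), hu1⟩ : Fin ((mv j1 : ℕ)))
        = Fin.castLE hle k1 := rfl
    have e2 : Fin.castLE (Fin.is_le (mv j2)) (⟨(k2 : ℕ), hu2⟩ : Fin ((mv j2 : ℕ)))
        = Fin.castLE hle k2 := rfl
    rw [hperm, hperm, e1, e2, heq]
  have hlt := rank_lt_card_of_eq_rows M hac hrows
  have hcards : Fintype.card ((j : Fin d) × Fin ((mv j : ℕ))) = ρ := by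
    rw [Fintype.card_sigma]
    simpa [hmv] using hv3
  omega
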